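/- Let K ≥ 1, let n_1,…,n_K be positive integers, let A ∈ (0,1), and for each μ set Q(μ) = (⌊A·n_μ⌋ + 1)/n_μ. Let p_1,…,p_K ∈ (0,1) satisfy p_μ < Q(μ) < 1 for every μ. Define the probability of failure δ = 1 − ∏_{μ=1}^{K} ∑_{k=0}^{⌊A·n_μ⌋} C(n_μ,k) · p_μ^k · (1 − p_μ)^{n_μ − k}. Then 1 − ∏_{μ=1}^{K} [1 − exp(−n_μ · D(Q(μ)‖p_μ)) / √(8 · n_μ · Q(μ) · (1 − Q(μ)))] ≤ δ ≤ 1 − ∏_{μ=1}^{K} [1 − exp(−n_μ · D(Q(μ)‖p_μ))]. -/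

import Mathlib

open Finset

/-- Kullback–Leibler divergence between Bernoulli(q) and Bernoulli(p). -/
noncomputable def KL (q p : ℝ) : ℝ :=
  q * Real.log (q / p) + (1 - q) * Real.log ((1 - q) / (1 - p))

open Filter Real Stirling Nat Topology

lemma sqrtpi_le_stirlingSeq (m : ℕ) : Real.sqrt π ≤ stirlingSeq (m+1) := by
  refine le_of_tendsto tendsto_stirlingSeq_sqrt_pi ?_
  filter_upwards [eventually_ge_atTop (m+1)] with b hb
  obtain ⟨b', rfl⟩ : ∃ b', b = b' + 1 := ⟨b - 1, by omega⟩
  exact stirlingSeq'_antitone (Nat.le_of_succ_le_succ hb)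


lemma diff12 (n : ℕ) :
    Real.log (stirlingSeq (n + 1)) - Real.log (stirlingSeq (n + 2)) ≤
      1/12 * (1/(n+1 : ℝ) - 1/(n+2 : ℝ)) := by
  set x : ℝ := ((1 : ℝ) / (2 * ↑(n + 1) + 1)) ^ 2 with hx
  have h_nonneg : (0:ℝ) ≤ x := sq_nonneg _
  have hlt : x < 1 := by
    rw [hx, one_div, inv_pow]
    exact inv_lt_one_of_one_lt₀ (one_lt_pow₀ (lt_add_of_pos_left _ (by positivity)) two_ne_zero)
  have g : HasSum (fun k : ℕ => (1/3 : ℝ) * x ^ (k+1)) (1/3 * (x / (1 - x))) := by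
    have g' := (hasSum_geometric_of_lt_one h_nonneg hlt).mul_left ((1/3 : ℝ) * x)
    have e1 : (fun k : ℕ => (1/3 : ℝ) * x ^ (k+1)) = (fun i => 1/3*x*x^i) := by funext k; ring
    have e2 : (1/3 * (x / (1 - x)) : ℝ) = 1/3*x*(1-x)⁻¹ := by ring
    rw [e1, e2]; exact g'
  have hab (k : ℕ) : (1 : ℝ) / (2 * ↑(k + 1) + 1) * x ^ (k + 1) ≤ (1/3 : ℝ) * x ^ (k+1) := by
    have h3 : ((1:ℝ) / (2 * ↑(k + 1) + 1)) ≤ 1/3 := by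
      rw [div_le_div_iff₀ (by positivity) (by norm_num)]
      have : (1:ℝ) ≤ (k+1 : ℕ) := by exact_mod_cast Nat.succ_le_succ (Nat.zero_le k)
      push_cast; nlinarith
    exact mul_le_mul_of_nonneg_right h3 (pow_nonneg h_nonneg _)
  have key := hasSum_le hab (log_stirlingSeq_diff_hasSum n) g
  refine key.trans (le_of_eq ?_)
  have h2 : (1:ℝ) - x ≠ 0 := by linarith
  rw [hx] at h2 ⊢
  have hpos : (2 * ((n:ℝ) + 1) + 1) ≠ 0 := by positivity
  have hn1 : ((n:ℝ) + 1) ≠ 0 := by positivity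
  have hn2 : ((n:ℝ) + 2) ≠ 0 := by positivity
  push_cast at h2 ⊢
  field_simp
  ring_nf
  have hq : (24 + (n:ℝ)*36 + (n:ℝ)^2*12) ≠ 0 := by positivity
  field_simp
  ring

lemma telescope (M : ℕ) : ∀ N : ℕ,
    Real.log (stirlingSeq (M + 1)) - Real.log (stirlingSeq (M + 1 + N)) ≤
      1/12 * (1/(M+1 : ℝ) - 1/(M+1+N : ℝ)) := by
  intro N
  induction N with
  | zero => simp
  | succ N ih =>
      have h := diff12 (M + N)
      have e1 : M + N + 1 = M + 1 + N := by omega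
      have e2 : M + N + 2 = M + 1 + (N+1) := by omega
      rw [e1, e2] at h
      have : ((M:ℝ) + ↑N + 1) = ((M:ℝ) + 1 + ↑N) := by ring
      push_cast at h ⊢
      have ha : (1:ℝ)/(↑M+↑N+1) = 1/(↑M+1+↑N) := by ring_nf
      have hb : (1:ℝ)/(↑M+↑N+2) = 1/(↑M+1+(↑N+1)) := by ring_nf
      linarith

lemma log_stirling_ub (m : ℕ) :
    Real.log (stirlingSeq (m + 1)) ≤ Real.log (Real.sqrt π) + 1/(12*(m+1) : ℝ) := by
  have hlim : Tendsto (fun N : ℕ => Real.log (stirlingSeq (m + 1 + N))) atTop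
      (𝓝 (Real.log (Real.sqrt π))) := by
    have h1 : Tendsto (fun N : ℕ => m + 1 + N) atTop atTop :=
      tendsto_atTop_atTop_of_monotone (fun a b h => by omega) (fun b => ⟨b, by omega⟩)
    exact (tendsto_stirlingSeq_sqrt_pi.comp h1).log (by positivity)
  have key : ∀ N : ℕ, Real.log (stirlingSeq (m+1)) - 1/12 * (1/(m+1:ℝ)) ≤
      Real.log (stirlingSeq (m + 1 + N)) := by
    intro N
    have h := telescope m N
    have : (0:ℝ) ≤ 1/(m+1+N : ℝ) := by positivity
    push_cast at h ⊢
    linarith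
  have := le_of_tendsto_of_tendsto' tendsto_const_nhds hlim key
  have e : 1/12 * (1/(m+1:ℝ)) = 1/(12*(m+1):ℝ) := by
    have : ((m:ℝ)+1) ≠ 0 := by positivity
    field_simp
  linarith [e ▸ this]

lemma stirling_ub' (m : ℕ) :
    stirlingSeq (m+1) ≤ Real.sqrt π * Real.exp (1/(12*(m+1) : ℝ)) := by
  have h := log_stirling_ub m
  have hpos := stirlingSeq'_pos m
  calc stirlingSeq (m+1) = Real.exp (Real.log (stirlingSeq (m+1))) := (Real.exp_log hpos).symm
    _ ≤ Real.exp (Real.log (Real.sqrt π) + 1/(12*(m+1) : ℝ)) := Real.exp_le_exp.mpr h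
    _ = Real.sqrt π * Real.exp (1/(12*(m+1) : ℝ)) := by
        rw [Real.exp_add, Real.exp_log (by positivity)]

lemma fac_sq_lb (n : ℕ) (hn : 1 ≤ n) :
    π * (2*n) * (((n:ℝ)/Real.exp 1)^n)^2 ≤ ((n ! : ℕ):ℝ)^2 := by
  obtain ⟨m, rfl⟩ : ∃ m, n = m + 1 := ⟨n - 1, by omega⟩
  have hs := sqrtpi_le_stirlingSeq m
  have hfac : ((m+1)! : ℝ) = stirlingSeq (m+1) * (Real.sqrt (2*(m+1)) * (((m+1:ℕ):ℝ)/Real.exp 1)^(m+1)) := by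
    rw [stirlingSeq]; field_simp; norm_cast
  have h2 : π ≤ (stirlingSeq (m+1))^2 := by
    rw [← Real.sq_sqrt (le_of_lt Real.pi_pos)]
    exact pow_le_pow_left₀ (Real.sqrt_nonneg _) hs 2
  rw [hfac, mul_pow, mul_pow, Real.sq_sqrt (by positivity)]
  push_cast
  nlinarith [mul_le_mul_of_nonneg_right h2 (show (0:ℝ) ≤ 2*((m:ℝ)+1) * ((((m:ℝ)+1)/Real.exp 1)^(m+1))^2 by positivity)]

lemma fac_sq_ub (n : ℕ) (hn : 1 ≤ n) :
    ((n ! : ℕ):ℝ)^2 ≤ π * Real.exp (1/(6*n)) * (2*n) * (((n:ℝ)/Real.exp 1)^n)^2 := by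
  obtain ⟨m, rfl⟩ : ∃ m, n = m + 1 := ⟨n - 1, by omega⟩
  have hs := stirling_ub' m
  have hfac : ((m+1)! : ℝ) = stirlingSeq (m+1) * (Real.sqrt (2*(m+1)) * (((m+1:ℕ):ℝ)/Real.exp 1)^(m+1)) := by
    rw [stirlingSeq]; field_simp; norm_cast
  have h2 : (stirlingSeq (m+1))^2 ≤ π * Real.exp (1/(6*(m+1):ℝ)) := by
    calc (stirlingSeq (m+1))^2 ≤ (Real.sqrt π * Real.exp (1/(12*(m+1):ℝ)))^2 :=
          pow_le_pow_left₀ (le_of_lt (stirlingSeq'_pos m)) hs 2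
      _ = π * Real.exp (1/(12*(m+1):ℝ) + 1/(12*(m+1):ℝ)) := by
          rw [mul_pow, Real.sq_sqrt (le_of_lt Real.pi_pos), sq, ← Real.exp_add]
      _ = π * Real.exp (1/(6*(m+1):ℝ)) := by
          congr 1
          congr 1
          have : ((m:ℝ)+1) ≠ 0 := by positivity
          rw [← add_div, div_eq_div_iff (by positivity) (by positivity)]
          ring
  rw [hfac, mul_pow, mul_pow, Real.sq_sqrt (by positivity)]
  push_cast at h2 ⊢
  nlinarith [mul_le_mul_of_nonneg_right h2 (show (0:ℝ) ≤ 2*((m:ℝ)+1) * ((((m:ℝ)+1)/Real.exp 1)^(m+1))^2 by positivity)]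

lemma choose_sq_lb (k r : ℕ) (hk : 1 ≤ k) (hr : 1 ≤ r)
    (hπ : π * Real.exp (1/(6*(k:ℝ)) + 1/(6*(r:ℝ))) ≤ 4) :
    ((k+r:ℕ):ℝ)^(2*(k+r)) * ((k+r:ℕ):ℝ) / (8*(k:ℝ)*(r:ℝ)) ≤
      (((k+r).choose k : ℝ) * (k:ℝ)^k * (r:ℝ)^r)^2 := by
  have hkr : 1 ≤ k + r := by omega
  have hC : ((k+r).choose k : ℝ) * (k ! : ℕ) * (r ! : ℕ) = ((k+r)! : ℕ) := by
    have h := Nat.choose_mul_factorial_mul_factorial (show k ≤ k + r by omega)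
    rw [Nat.add_sub_cancel_left] at h
    exact_mod_cast h
  set Xk : ℝ := (((k:ℝ)/Real.exp 1)^k)^2 with hXk
  set Xr : ℝ := (((r:ℝ)/Real.exp 1)^r)^2 with hXr
  have hab : ((k ! : ℕ):ℝ)^2 * ((r ! : ℕ):ℝ)^2 ≤ 16*π*(k:ℝ)*(r:ℝ)*(Xk*Xr) := by
    have h1 := fac_sq_ub k hk
    have h2 := fac_sq_ub r hr
    have h3 : ((k ! : ℕ):ℝ)^2 * ((r ! : ℕ):ℝ)^2 ≤
        (π * Real.exp (1/(6*(k:ℝ))) * (2*(k:ℝ)) * Xk) * (π * Real.exp (1/(6*(r:ℝ))) * (2*(r:ℝ)) * Xr) := by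
      apply mul_le_mul h1 h2 (by positivity) (by positivity)
    refine h3.trans ?_
    have hid : (π * Real.exp (1/(6*(k:ℝ))) * (2*(k:ℝ)) * Xk) * (π * Real.exp (1/(6*(r:ℝ))) * (2*(r:ℝ)) * Xr)
        = (π * Real.exp (1/(6*(k:ℝ)) + 1/(6*(r:ℝ)))) * (4*π*(k:ℝ)*(r:ℝ)*(Xk*Xr)) := by
      rw [Real.exp_add]; ring
    rw [hid]
    have hnn : (0:ℝ) ≤ 4*π*(k:ℝ)*(r:ℝ)*(Xk*Xr) := by positivity
    nlinarith [mul_le_mul_of_nonneg_right hπ hnn]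
  have habpos : (0:ℝ) < ((k ! : ℕ):ℝ)^2 * ((r ! : ℕ):ℝ)^2 := by positivity
  rw [div_le_iff₀ (by positivity)]
  rw [← mul_le_mul_iff_of_pos_right habpos]
  have hrhs : (((k+r).choose k : ℝ) * (k:ℝ)^k * (r:ℝ)^r)^2 * (8*(k:ℝ)*(r:ℝ)) *
      (((k ! : ℕ):ℝ)^2 * ((r ! : ℕ):ℝ)^2) = (((k+r)! : ℕ):ℝ)^2 * ((k:ℝ)^k * (r:ℝ)^r)^2 * (8*(k:ℝ)*(r:ℝ)) := by
    rw [← hC]; ring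
  rw [hrhs]
  calc ((k+r:ℕ):ℝ)^(2*(k+r)) * ((k+r:ℕ):ℝ) * (((k ! : ℕ):ℝ)^2 * ((r ! : ℕ):ℝ)^2)
      ≤ ((k+r:ℕ):ℝ)^(2*(k+r)) * ((k+r:ℕ):ℝ) * (16*π*(k:ℝ)*(r:ℝ)*(Xk*Xr)) := by
        apply mul_le_mul_of_nonneg_left hab (by positivity)
    _ = (π * (2*((k+r:ℕ):ℝ)) * ((((k+r:ℕ):ℝ)/Real.exp 1)^(k+r))^2) * ((k:ℝ)^k * (r:ℝ)^r)^2 * (8*(k:ℝ)*(r:ℝ)) := by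
        rw [hXk, hXr]
        push_cast
        have he : Real.exp 1 ≠ 0 := Real.exp_ne_zero 1
        simp only [div_pow]
        ring
    _ ≤ (((k+r)! : ℕ):ℝ)^2 * ((k:ℝ)^k * (r:ℝ)^r)^2 * (8*(k:ℝ)*(r:ℝ)) := by
        apply mul_le_mul_of_nonneg_right (mul_le_mul_of_nonneg_right (fac_sq_lb (k+r) hkr) (by positivity)) (by positivity)

lemma choose_sq_lb' (k r : ℕ) (hk : 1 ≤ k) (hr : 1 ≤ r) :
    ((k+r:ℕ):ℝ)^(2*(k+r)) * ((k+r:ℕ):ℝ) / (8*(k:ℝ)*(r:ℝ)) ≤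
      (((k+r).choose k : ℝ) * (k:ℝ)^k * (r:ℝ)^r)^2 := by
  by_cases hsmall : k + r ≤ 4
  · have hk3 : k ≤ 3 := by omega
    have hr3 : r ≤ 3 := by omega
    interval_cases k <;> interval_cases r <;> norm_num [Nat.choose] <;> nlinarith [Real.pi_pos]
  · apply choose_sq_lb k r hk hr
    push_cast
    have hk1 : (1:ℝ) ≤ (k:ℝ) := by exact_mod_cast hk
    have hr1 : (1:ℝ) ≤ (r:ℝ) := by exact_mod_cast hr
    have hn5 : (5:ℝ) ≤ (k:ℝ) + (r:ℝ) := by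
      have : 5 ≤ k + r := by omega
      exact_mod_cast this
    have hx : 1/(6*(k:ℝ)) + 1/(6*(r:ℝ)) ≤ 5/24 := by
      rw [div_add_div _ _ (by positivity) (by positivity), div_le_div_iff₀ (by positivity) (by norm_num)]
      nlinarith
    have hex : Real.exp (1/(6*(k:ℝ)) + 1/(6*(r:ℝ))) ≤ 24/19 := by
      have h1 : Real.exp (1/(6*(k:ℝ)) + 1/(6*(r:ℝ))) ≤ Real.exp (5/24) := Real.exp_le_exp.mpr hx
      have h2 : (1:ℝ) - 5/24 ≤ Real.exp (-(5/24)) := by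
        have := Real.add_one_le_exp (-(5/24 : ℝ))
        linarith
      have h3 := Real.exp_pos (5/24 : ℝ)
      have h4 : Real.exp (-(5/24:ℝ)) * Real.exp ((5/24:ℝ)) = 1 := by
        rw [← Real.exp_add]; norm_num
      nlinarith
    nlinarith [Real.pi_lt_d2, Real.pi_pos, Real.exp_pos (1/(6*(k:ℝ)) + 1/(6*(r:ℝ)))]

lemma binom_lb (k r : ℕ) (hk : 1 ≤ k) (hr : 1 ≤ r) :
    ((k+r:ℕ):ℝ)^(k+r) * Real.sqrt (((k+r:ℕ):ℝ) / (8*(k:ℝ)*(r:ℝ))) ≤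
      ((k+r).choose k : ℝ) * (k:ℝ)^k * (r:ℝ)^r := by
  have h1 : ((k+r:ℕ):ℝ)^(k+r) * Real.sqrt (((k+r:ℕ):ℝ) / (8*(k:ℝ)*(r:ℝ)))
      = Real.sqrt (((k+r:ℕ):ℝ)^(2*(k+r)) * (((k+r:ℕ):ℝ) / (8*(k:ℝ)*(r:ℝ)))) := by
    rw [pow_mul', Real.sqrt_mul (by positivity), Real.sqrt_sq (by positivity)]
  rw [h1]
  have h2 : ((k+r:ℕ):ℝ)^(2*(k+r)) * (((k+r:ℕ):ℝ) / (8*(k:ℝ)*(r:ℝ)))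
      = ((k+r:ℕ):ℝ)^(2*(k+r)) * ((k+r:ℕ):ℝ) / (8*(k:ℝ)*(r:ℝ)) := by ring
  rw [h2]
  calc Real.sqrt (((k+r:ℕ):ℝ)^(2*(k+r)) * ((k+r:ℕ):ℝ) / (8*(k:ℝ)*(r:ℝ)))
      ≤ Real.sqrt ((((k+r).choose k : ℝ) * (k:ℝ)^k * (r:ℝ)^r)^2) :=
        Real.sqrt_le_sqrt (choose_sq_lb' k r hk hr)
    _ = ((k+r).choose k : ℝ) * (k:ℝ)^k * (r:ℝ)^r := Real.sqrt_sq (by positivity)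

lemma KL_nonneg {q p : ℝ} (hp : 0 < p) (hp1 : p < 1) (hq : 0 < q) (hq1 : q < 1) :
    0 ≤ KL q p := by
  have h1 : Real.log (p / q) ≤ p / q - 1 := Real.log_le_sub_one_of_pos (by positivity)
  have h2 : Real.log ((1-p) / (1-q)) ≤ (1-p)/(1-q) - 1 :=
    Real.log_le_sub_one_of_pos (by apply _root_.div_pos <;> linarith)
  have e1 : Real.log (q / p) = - Real.log (p / q) := by
    rw [← Real.log_inv, inv_div]
  have e2 : Real.log ((1-q) / (1-p)) = - Real.log ((1-p) / (1-q)) := by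
    rw [← Real.log_inv, inv_div]
  have hq1' : (0:ℝ) < 1 - q := by linarith
  have b1 : q * Real.log (q / p) ≥ q - p := by
    rw [e1]
    have := mul_le_mul_of_nonneg_left h1 hq.le
    have hd : q * (p/q - 1) = p - q := by field_simp
    nlinarith
  have b2 : (1-q) * Real.log ((1-q) / (1-p)) ≥ p - q := by
    rw [e2]
    have := mul_le_mul_of_nonneg_left h2 hq1'.le
    have hd : (1-q) * ((1-p)/(1-q) - 1) = q - p := by field_simp; ring
    nlinarith
  unfold KL
  linarith

lemma exp_KL (n k : ℕ) (p Q : ℝ) (hn : 0 < n) (hkn : k ≤ n) (hQ : Q = (k:ℝ)/(n:ℝ))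
    (hp : 0 < p) (hp1 : p < 1) (hQ0 : 0 < Q) (hQ1 : Q < 1) :
    Real.exp (-(n:ℝ) * KL Q p) = (p/Q)^k * ((1-p)/(1-Q))^(n-k) := by
  have hn0 : (0:ℝ) < (n:ℝ) := by exact_mod_cast hn
  have hnQ : (n:ℝ) * Q = (k:ℝ) := by rw [hQ]; field_simp
  have hn1Q : (n:ℝ) * (1 - Q) = ((n-k:ℕ):ℝ) := by
    rw [Nat.cast_sub hkn, hQ]; field_simp
  have e1 : Real.log (Q / p) = - Real.log (p / Q) := by rw [← Real.log_inv, inv_div]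
  have e2 : Real.log ((1-Q) / (1-p)) = - Real.log ((1-p) / (1-Q)) := by
    rw [← Real.log_inv, inv_div]
  have harg : -(n:ℝ) * KL Q p = (k:ℝ) * Real.log (p/Q) + ((n-k:ℕ):ℝ) * Real.log ((1-p)/(1-Q)) := by
    unfold KL
    rw [e1, e2, ← hnQ, ← hn1Q]
    ring
  rw [harg, Real.exp_add, Real.exp_nat_mul, Real.exp_nat_mul,
    Real.exp_log (by positivity), Real.exp_log (by apply _root_.div_pos <;> linarith)]

lemma tail_le (n k : ℕ) (hkn : k ≤ n) (p Q : ℝ) (hp : 0 < p) (hp1 : p < 1)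
    (hpQ : p < Q) (hQ1 : Q < 1) :
    ∑ j ∈ Finset.Ico k (n+1), (n.choose j : ℝ) * p^j * (1-p)^(n-j) ≤
      (p/Q)^k * ((1-p)/(1-Q))^(n-k) := by
  have hQ0 : 0 < Q := lt_trans hp hpQ
  have h1Q : (0:ℝ) < 1 - Q := by linarith
  have h1p : (0:ℝ) < 1 - p := by linarith
  set s : ℝ := Q*(1-p)/(p*(1-Q)) with hs
  have hs0 : 0 < s := by positivity
  have hs1 : 1 ≤ s := by
    rw [hs, le_div_iff₀ (by positivity), one_mul]
    nlinarith
  have step1 : ∑ j ∈ Finset.Ico k (n+1), (n.choose j : ℝ) * p^j * (1-p)^(n-j) ≤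
      ∑ j ∈ Finset.Ico k (n+1), (s⁻¹)^k * ((n.choose j : ℝ) * (p*s)^j * (1-p)^(n-j)) := by
    apply Finset.sum_le_sum
    intro j hj
    have hkj : k ≤ j := (Finset.mem_Ico.mp hj).1
    have he : (s⁻¹)^k * ((n.choose j : ℝ) * (p*s)^j * (1-p)^(n-j)) =
        ((n.choose j : ℝ) * p^j * (1-p)^(n-j)) * s^(j-k) := by
      rw [pow_sub₀ _ hs0.ne' hkj, mul_pow]
      rw [← inv_pow]
      ring
    rw [he]
    exact le_mul_of_one_le_right (by positivity) (one_le_pow₀ hs1)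
  have step2 : ∑ j ∈ Finset.Ico k (n+1), (s⁻¹)^k * ((n.choose j : ℝ) * (p*s)^j * (1-p)^(n-j)) ≤
      ∑ j ∈ Finset.range (n+1), (s⁻¹)^k * ((n.choose j : ℝ) * (p*s)^j * (1-p)^(n-j)) := by
    apply Finset.sum_le_sum_of_subset_of_nonneg
    · intro j hj
      simp only [Finset.mem_Ico, Finset.mem_range] at *
      omega
    · intro j _ _
      positivity
  have step3 : ∑ j ∈ Finset.range (n+1), (s⁻¹)^k * ((n.choose j : ℝ) * (p*s)^j * (1-p)^(n-j)) =
      (s⁻¹)^k * (p*s + (1-p))^n := by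
    rw [← Finset.mul_sum]
    congr 1
    rw [add_pow]
    apply Finset.sum_congr rfl
    intro j _
    ring
  have hps : p*s + (1-p) = (1-p)/(1-Q) := by
    rw [hs]
    field_simp
    ring
  have step4 : (s⁻¹)^k * (p*s + (1-p))^n = (p/Q)^k * ((1-p)/(1-Q))^(n-k) := by
    rw [hps]
    have hn : n = (n-k) + k := (Nat.sub_add_cancel hkn).symm
    rw [hn, pow_add, Nat.add_sub_cancel]
    have hinv : s⁻¹ * ((1-p)/(1-Q)) = p/Q := by
      rw [hs]
      field_simp
    rw [← mul_assoc, mul_comm ((s⁻¹)^k) _, mul_assoc, ← mul_pow, hinv]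
    ring
  rw [step3] at step2
  rw [step4] at step2
  linarith

lemma committee (n k : ℕ) (hk : 1 ≤ k) (hkn : k < n) (p Q : ℝ)
    (hQ : Q = (k:ℝ)/(n:ℝ)) (hp : 0 < p) (hp1 : p < 1) (hpQ : p < Q) :
    1 - Real.exp (-(n:ℝ) * KL Q p) ≤ ∑ j ∈ Finset.range k, (n.choose j:ℝ)*p^j*(1-p)^(n-j) ∧
    ∑ j ∈ Finset.range k, (n.choose j:ℝ)*p^j*(1-p)^(n-j) ≤
      1 - Real.exp (-(n:ℝ) * KL Q p) / Real.sqrt (8*(n:ℝ)*Q*(1-Q)) := by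
  have hn0 : 0 < n := by omega
  have hn0' : (0:ℝ) < (n:ℝ) := by exact_mod_cast hn0
  set r : ℕ := n - k with hr
  have hr1 : 1 ≤ r := by omega
  have hnkr : n = k + r := by omega
  have hrc : (r:ℝ) = (n:ℝ) - (k:ℝ) := by
    rw [hr, Nat.cast_sub hkn.le]
  have hk0' : (0:ℝ) < (k:ℝ) := by exact_mod_cast hk
  have hr0' : (0:ℝ) < (r:ℝ) := by exact_mod_cast hr1
  have hQ0 : 0 < Q := lt_trans hp hpQ
  have hQ1 : Q < 1 := by
    rw [hQ, div_lt_one hn0']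
    exact_mod_cast hkn
  have h1Q : 1 - Q = (r:ℝ)/(n:ℝ) := by
    rw [hQ, hrc]
    field_simp
  have h1Qpos : (0:ℝ) < 1 - Q := by linarith
  have h1p : (0:ℝ) < 1 - p := by linarith
  set A := Real.sqrt (8*(n:ℝ)*Q*(1-Q)) with hA
  have hA0 : 0 < A := by
    rw [hA]
    apply Real.sqrt_pos.mpr
    positivity
  -- key : 1 ≤ C * Q^k * (1-Q)^r * A
  have hAy : A = Real.sqrt (8*(k:ℝ)*(r:ℝ)/(n:ℝ)) := by
    rw [hA]
    congr 1
    rw [hQ] at h1Qpos ⊢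
    rw [hrc]
    field_simp
  have hxy : Real.sqrt ((n:ℝ)/(8*(k:ℝ)*(r:ℝ))) * Real.sqrt (8*(k:ℝ)*(r:ℝ)/(n:ℝ)) = 1 := by
    rw [← Real.sqrt_mul (by positivity)]
    rw [show (n:ℝ)/(8*(k:ℝ)*(r:ℝ)) * (8*(k:ℝ)*(r:ℝ)/(n:ℝ)) = 1 by field_simp]
    exact Real.sqrt_one
  have hbl := binom_lb k r hk hr1
  rw [← hnkr] at hbl
  have hbl2 : (n:ℝ)^n ≤ ((n.choose k : ℝ) * (k:ℝ)^k * (r:ℝ)^r) * Real.sqrt (8*(k:ℝ)*(r:ℝ)/(n:ℝ)) := by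
    have := mul_le_mul_of_nonneg_right hbl (Real.sqrt_nonneg (8*(k:ℝ)*(r:ℝ)/(n:ℝ)))
    calc (n:ℝ)^n = (n:ℝ)^n * (Real.sqrt ((n:ℝ)/(8*(k:ℝ)*(r:ℝ))) * Real.sqrt (8*(k:ℝ)*(r:ℝ)/(n:ℝ))) := by
          rw [hxy]; ring
      _ = (n:ℝ)^n * Real.sqrt ((n:ℝ)/(8*(k:ℝ)*(r:ℝ))) * Real.sqrt (8*(k:ℝ)*(r:ℝ)/(n:ℝ)) := by ring
      _ ≤ _ := this
  have key : 1 ≤ (n.choose k : ℝ) * Q^k * (1-Q)^r * A := by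
    rw [hAy, h1Q, hQ, div_pow, div_pow]
    rw [show (n.choose k : ℝ) * ((k:ℝ)^k/(n:ℝ)^k) * ((r:ℝ)^r/(n:ℝ)^r) * Real.sqrt (8*(k:ℝ)*(r:ℝ)/(n:ℝ))
        = ((n.choose k : ℝ) * (k:ℝ)^k * (r:ℝ)^r) * Real.sqrt (8*(k:ℝ)*(r:ℝ)/(n:ℝ)) / ((n:ℝ)^k * (n:ℝ)^r) by ring]
    rw [le_div_iff₀ (by positivity), one_mul, ← pow_add, ← hnkr]
    exact hbl2
  -- per-term bound
  have hterm : Real.exp (-(n:ℝ)*KL Q p) / A ≤ (n.choose k:ℝ)*p^k*(1-p)^(n-k) := by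
    rw [exp_KL n k p Q hn0 hkn.le hQ hp hp1 hQ0 hQ1, div_le_iff₀ hA0]
    rw [show (p/Q)^k * ((1-p)/(1-Q))^(n-k) = (p^k*(1-p)^(n-k)) / (Q^k*(1-Q)^(n-k)) by
      rw [div_pow, div_pow]; ring]
    rw [div_le_iff₀ (by positivity)]
    calc p^k*(1-p)^(n-k) = (p^k*(1-p)^(n-k)) * 1 := by ring
      _ ≤ (p^k*(1-p)^(n-k)) * ((n.choose k : ℝ) * Q^k * (1-Q)^r * A) :=
          mul_le_mul_of_nonneg_left key (by positivity)
      _ = (n.choose k:ℝ)*p^k*(1-p)^(n-k) * A * (Q^k*(1-Q)^(n-k)) := by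
          rw [← hr]; ring
  -- total sum is 1
  have htot : ∑ j ∈ Finset.range (n+1), (n.choose j:ℝ)*p^j*(1-p)^(n-j) = 1 := by
    calc ∑ j ∈ Finset.range (n+1), (n.choose j:ℝ)*p^j*(1-p)^(n-j)
        = (p + (1-p))^n := by
          rw [add_pow]
          exact Finset.sum_congr rfl (fun j _ => by ring)
      _ = 1 := by norm_num
  have hsplit : (∑ j ∈ Finset.range k, (n.choose j:ℝ)*p^j*(1-p)^(n-j)) +
      (∑ j ∈ Finset.Ico k (n+1), (n.choose j:ℝ)*p^j*(1-p)^(n-j)) = 1 := by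
    rw [Finset.sum_range_add_sum_Ico _ (by omega), htot]
  have htail_ub := tail_le n k hkn.le p Q hp hp1 hpQ hQ1
  rw [← exp_KL n k p Q hn0 hkn.le hQ hp hp1 hQ0 hQ1] at htail_ub
  have htail_lb : Real.exp (-(n:ℝ)*KL Q p) / A ≤
      ∑ j ∈ Finset.Ico k (n+1), (n.choose j:ℝ)*p^j*(1-p)^(n-j) := by
    refine hterm.trans ?_
    apply Finset.single_le_sum (f := fun j => (n.choose j:ℝ)*p^j*(1-p)^(n-j))
    · intro j _
      positivity
    · simp only [Finset.mem_Ico]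
      omega
  constructor
  · linarith
  · linarith

/-- lower and upper bounds on the probability of failure δ for
independent binomial committees. -/
theorem stmt_5 (K : ℕ) (hK : 1 ≤ K) (n : Fin K → ℕ) (hn : ∀ μ, 1 ≤ n μ)
    (A : ℝ) (hA : A ∈ Set.Ioo (0 : ℝ) 1)
    (Q : Fin K → ℝ) (hQ : ∀ μ, Q μ = ((Nat.floor (A * n μ) : ℝ) + 1) / (n μ : ℝ))
    (p : Fin K → ℝ) (hp : ∀ μ, p μ ∈ Set.Ioo (0 : ℝ) 1)
    (hpQ : ∀ μ, p μ < Q μ) (hQ1 : ∀ μ, Q μ < 1)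
    (δ : ℝ)
    (hδ : δ = 1 - ∏ μ, ∑ k ∈ Finset.range (Nat.floor (A * n μ) + 1),
        ((n μ).choose k : ℝ) * p μ ^ k * (1 - p μ) ^ (n μ - k)) :
    1 - ∏ μ, (1 - Real.exp (-(n μ : ℝ) * KL (Q μ) (p μ)) /
          Real.sqrt (8 * (n μ : ℝ) * Q μ * (1 - Q μ))) ≤ δ ∧
    δ ≤ 1 - ∏ μ, (1 - Real.exp (-(n μ : ℝ) * KL (Q μ) (p μ))) := by
  have hcore : ∀ μ,
      1 - Real.exp (-(n μ : ℝ) * KL (Q μ) (p μ)) ≤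
        ∑ k ∈ Finset.range (Nat.floor (A * n μ) + 1),
          ((n μ).choose k : ℝ) * p μ ^ k * (1 - p μ) ^ (n μ - k) ∧
      (∑ k ∈ Finset.range (Nat.floor (A * n μ) + 1),
          ((n μ).choose k : ℝ) * p μ ^ k * (1 - p μ) ^ (n μ - k)) ≤
        1 - Real.exp (-(n μ : ℝ) * KL (Q μ) (p μ)) /
          Real.sqrt (8 * (n μ : ℝ) * Q μ * (1 - Q μ)) := by
    intro μ
    have hn0' : (0:ℝ) < (n μ : ℝ) := by exact_mod_cast hn μ
    have hQμ : Q μ = ((Nat.floor (A * n μ) + 1 : ℕ) : ℝ) / (n μ : ℝ) := by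
      rw [hQ μ]; push_cast; ring
    have hkn : Nat.floor (A * n μ) + 1 < n μ := by
      have h1 := hQ1 μ
      rw [hQμ, div_lt_one hn0'] at h1
      exact_mod_cast h1
    have h := committee (n μ) (Nat.floor (A * n μ) + 1) (by omega) hkn (p μ) (Q μ)
      hQμ (hp μ).1 (hp μ).2 (hpQ μ)
    exact h
  have hT0 : ∀ μ, (0:ℝ) ≤ ∑ k ∈ Finset.range (Nat.floor (A * n μ) + 1),
      ((n μ).choose k : ℝ) * p μ ^ k * (1 - p μ) ^ (n μ - k) := by
    intro μ
    apply Finset.sum_nonneg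
    intro j _
    have h1 := (hp μ).1
    have h2 := (hp μ).2
    apply mul_nonneg (mul_nonneg (Nat.cast_nonneg _) (pow_nonneg h1.le _)) (pow_nonneg (by linarith) _)
  have hE0 : ∀ μ, (0:ℝ) ≤ 1 - Real.exp (-(n μ : ℝ) * KL (Q μ) (p μ)) := by
    intro μ
    have hQ0 : 0 < Q μ := lt_trans (hp μ).1 (hpQ μ)
    have hKL := KL_nonneg (hp μ).1 (hp μ).2 hQ0 (hQ1 μ)
    have : Real.exp (-(n μ : ℝ) * KL (Q μ) (p μ)) ≤ 1 := by
      rw [Real.exp_le_one_iff]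
      have : (0:ℝ) ≤ (n μ : ℝ) := Nat.cast_nonneg _
      nlinarith
    linarith
  constructor
  · rw [hδ]
    have : ∏ μ, (∑ k ∈ Finset.range (Nat.floor (A * n μ) + 1),
        ((n μ).choose k : ℝ) * p μ ^ k * (1 - p μ) ^ (n μ - k)) ≤
        ∏ μ, (1 - Real.exp (-(n μ : ℝ) * KL (Q μ) (p μ)) /
          Real.sqrt (8 * (n μ : ℝ) * Q μ * (1 - Q μ))) :=
      Finset.prod_le_prod (fun μ _ => hT0 μ) (fun μ _ => (hcore μ).2)
    linarith
  · rw [hδ]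
    have : ∏ μ, (1 - Real.exp (-(n μ : ℝ) * KL (Q μ) (p μ))) ≤
        ∏ μ, (∑ k ∈ Finset.range (Nat.floor (A * n μ) + 1),
        ((n μ).choose k : ℝ) * p μ ^ k * (1 - p μ) ^ (n μ - k)) :=
      Finset.prod_le_prod (fun μ _ => hE0 μ) (fun μ _ => (hcore μ).1)
    linarith
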